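/- arXiv:2604.14219 — 4 statements merged into one kernel-verified Lean document; each statement's English description precedes it below -/
import Mathlib

section
/- Define sequences P_n, Q_n (over ℚ, for n ≥ 0) by P_0 = 1, P_1 = 20, Q_0 = 1, Q_1 = 21, and for n ≥ 2: U_n = (2n+1)(3n²+3n+1)·U_{n−1} − n⁶·U_{n−2}, where U stands for either P or Q. Let s_n := ∑_{k=0}^n (n choose k)² (2k choose n)² and let B_n be the rational sequence with B_0 = 0, B_1 = 1 and (n+1)³B_{n+1} = (2n+1)(12n²+12n+4)B_n − 16n³B_{n−1} for n ≥ 1. Then for every n ≥ 0: P_n = ((n+1)!)³ · s_{n+1} / 4^{n+1} and Q_n = ((n+1)!)³ · B_{n+1} / 4^n. -/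
/-- The level-8 Apéry-like sequence s_n = ∑_{k=0}^n (n choose k)² (2k choose n)². -/
def s (n : ℕ) : ℕ := ∑ k ∈ Finset.range (n + 1), (n.choose k) ^ 2 * ((2 * k).choose n) ^ 2

lemma lemA (n k : ℕ) : ((n+1).choose k : ℚ) * ((n:ℚ)+1-(k:ℚ)) = (n.choose k : ℚ) * ((n:ℚ)+1) := by
  rcases le_or_gt k (n+1) with h | h
  · have h0 := Nat.choose_mul_succ_eq n k
    have h1 : ((n + 1 - k : ℕ) : ℚ) = (n:ℚ)+1-(k:ℚ) := by push_cast [Nat.cast_sub h]; ring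
    calc ((n+1).choose k : ℚ) * ((n:ℚ)+1-(k:ℚ)) = ((n+1).choose k : ℚ) * ((n + 1 - k : ℕ) : ℚ) := by rw [h1]
    _ = (n.choose k : ℚ) * ((n:ℚ)+1) := by exact_mod_cast congrArg (Nat.cast (R := ℚ)) h0.symm
  · have h1 : n.choose k = 0 := Nat.choose_eq_zero_of_lt (by omega)
    have h2 : (n+1).choose k = 0 := Nat.choose_eq_zero_of_lt (by omega)
    simp [h1, h2]

lemma lemB (n k : ℕ) : (n.choose (k+1) : ℚ) * ((k:ℚ)+1) = (n.choose k : ℚ) * ((n:ℚ)-(k:ℚ)) := by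
  rcases le_or_gt k n with h | h
  · have h0 := Nat.choose_succ_right_eq n k
    calc (n.choose (k+1) : ℚ) * ((k:ℚ)+1) = ((n.choose (k+1) * (k+1) : ℕ) : ℚ) := by push_cast; ring
    _ = ((n.choose k * (n-k) : ℕ) : ℚ) := by exact_mod_cast congrArg (Nat.cast (R := ℚ)) h0
    _ = (n.choose k : ℚ) * ((n:ℚ)-(k:ℚ)) := by push_cast [Nat.cast_sub h]; ring
  · have h1 : n.choose k = 0 := Nat.choose_eq_zero_of_lt (by omega)
    have h2 : n.choose (k+1) = 0 := Nat.choose_eq_zero_of_lt (by omega)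
    simp [h1, h2]

lemma keylem (m k : ℕ) :
    ((m:ℚ)+2)^3 * ((m+2).choose k : ℚ)^2 * ((2*k).choose (m+2) : ℚ)^2
      - (2*(m:ℚ)+3) * (12*((m:ℚ)+1)^2+12*((m:ℚ)+1)+4) * (((m+1).choose k : ℚ)^2 * ((2*k).choose (m+1) : ℚ)^2)
      + 16*((m:ℚ)+1)^3 * ((m.choose k : ℚ)^2 * ((2*k).choose m : ℚ)^2)
    = (4*(2*(m:ℚ)+3)*((m:ℚ)+1-(k:ℚ))^2 - ((m:ℚ)+2)^3) * ((m+2).choose (k+1) : ℚ)^2 * ((2*(k+1)).choose (m+2) : ℚ)^2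
      - (4*(2*(m:ℚ)+3)*((m:ℚ)+2-(k:ℚ))^2 - ((m:ℚ)+2)^3) * ((m+2).choose k : ℚ)^2 * ((2*k).choose (m+2) : ℚ)^2 := by
  have hm1 : ((m:ℚ)+1) ≠ 0 := by positivity
  have hm2 : ((m:ℚ)+2) ≠ 0 := by positivity
  have hk1 : ((k:ℚ)+1) ≠ 0 := by positivity
  have h1 := lemA (m+1) k
  have h2 := lemA m k
  have h3 := lemB (2*k) m
  have h4 := lemB (2*k) (m+1)
  have h5 := lemB (m+2) k
  simp only [show m + 1 + 1 = m + 2 by omega] at h1 h4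
  push_cast at h1 h2 h3 h4 h5
  -- h1 : C(m+2,k)*(m+2-k) = C(m+1,k)*(m+2)
  -- h2 : C(m+1,k)*(m+1-k) = C(m,k)*(m+1)
  -- h3 : C(2k,m+1)*(m+1) = C(2k,m)*(2k-m)
  -- h4 : C(2k,m+2)*(m+2) = C(2k,m+1)*(2k-m-1)
  -- h5 : C(m+2,k+1)*(k+1) = C(m+2,k)*(m+2-k)
  have e1 : ((m+1).choose k : ℚ) = ((m+2).choose k : ℚ) * ((m:ℚ)+2-(k:ℚ)) / ((m:ℚ)+2) := by
    field_simp
    linear_combination -h1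
  have e2 : ((m).choose k : ℚ) = ((m+2).choose k : ℚ) * ((m:ℚ)+2-(k:ℚ)) * ((m:ℚ)+1-(k:ℚ)) / (((m:ℚ)+2)*((m:ℚ)+1)) := by
    field_simp
    linear_combination (-((m:ℚ)+1-(k:ℚ))) * h1 - ((m:ℚ)+2) * h2
  have e3 : ((2*k).choose (m+1) : ℚ) = ((2*k).choose m : ℚ) * (2*(k:ℚ)-(m:ℚ)) / ((m:ℚ)+1) := by
    field_simp
    linear_combination h3
  have e4 : ((2*k).choose (m+2) : ℚ) = ((2*k).choose m : ℚ) * (2*(k:ℚ)-(m:ℚ)) * (2*(k:ℚ)-(m:ℚ)-1) / (((m:ℚ)+1)*((m:ℚ)+2)) := by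
    field_simp
    linear_combination (2*(k:ℚ)-(m:ℚ)-1) * h3 + ((m:ℚ)+1) * h4
  have e5 : ((m+2).choose (k+1) : ℚ) = ((m+2).choose k : ℚ) * ((m:ℚ)+2-(k:ℚ)) / ((k:ℚ)+1) := by
    field_simp
    linear_combination h5
  have e6 : ((2*(k+1)).choose (m+2) : ℚ)
      = ((2*k).choose (m+2) : ℚ) + 2*((2*k).choose (m+1) : ℚ) + ((2*k).choose m : ℚ) := by
    have hn : 2*(k+1) = (2*k+1)+1 := by ring
    rw [hn]
    rw [Nat.choose_succ_succ (2*k+1) (m+1), Nat.choose_succ_succ (2*k) m, Nat.choose_succ_succ (2*k) (m+1)]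
    push_cast
    ring
  rw [e6, e5, e4, e3, e2, e1]
  field_simp
  ring

lemma srec (m : ℕ) :
    ((m:ℚ)+2)^3 * (s (m+2) : ℚ)
      = (2*(m:ℚ)+3) * (12*((m:ℚ)+1)^2+12*((m:ℚ)+1)+4) * (s (m+1) : ℚ)
        - 16*((m:ℚ)+1)^3 * (s m : ℚ) := by
  set Gf : ℕ → ℚ := fun k =>
    (4*(2*(m:ℚ)+3)*((m:ℚ)+2-(k:ℚ))^2 - ((m:ℚ)+2)^3) * ((m+2).choose k : ℚ)^2 * ((2*k).choose (m+2) : ℚ)^2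
    with hGf
  have hA : ∀ k : ℕ,
      ((m:ℚ)+2)^3 * (((m+2).choose k : ℚ)^2 * ((2*k).choose (m+2) : ℚ)^2)
        - (2*(m:ℚ)+3) * (12*((m:ℚ)+1)^2+12*((m:ℚ)+1)+4) * (((m+1).choose k : ℚ)^2 * ((2*k).choose (m+1) : ℚ)^2)
        + 16*((m:ℚ)+1)^3 * ((m.choose k : ℚ)^2 * ((2*k).choose m : ℚ)^2)
      = Gf (k+1) - Gf k := by
    intro k
    simp only [hGf]
    push_cast
    linear_combination keylem m k
  have hsum0 : ∑ k ∈ Finset.range (m+3),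
      (((m:ℚ)+2)^3 * (((m+2).choose k : ℚ)^2 * ((2*k).choose (m+2) : ℚ)^2)
        - (2*(m:ℚ)+3) * (12*((m:ℚ)+1)^2+12*((m:ℚ)+1)+4) * (((m+1).choose k : ℚ)^2 * ((2*k).choose (m+1) : ℚ)^2)
        + 16*((m:ℚ)+1)^3 * ((m.choose k : ℚ)^2 * ((2*k).choose m : ℚ)^2)) = 0 := by
    rw [Finset.sum_congr rfl (fun k _ => hA k), Finset.sum_range_sub Gf (m+3)]
    have hg0 : Gf 0 = 0 := by
      simp [hGf, Nat.choose_eq_zero_of_lt (show 0 < m + 2 by omega)]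
    have hgN : Gf (m+3) = 0 := by
      simp [hGf, Nat.choose_eq_zero_of_lt (show m + 2 < m + 3 by omega)]
    rw [hg0, hgN]; ring
  have hs2 : (s (m+2) : ℚ) = ∑ k ∈ Finset.range (m+3), (((m+2).choose k : ℚ)^2 * ((2*k).choose (m+2) : ℚ)^2) := by
    rw [show m+3 = m+2+1 by omega]
    simp only [s]
    push_cast
    rfl
  have hs1 : (s (m+1) : ℚ) = ∑ k ∈ Finset.range (m+3), (((m+1).choose k : ℚ)^2 * ((2*k).choose (m+1) : ℚ)^2) := by
    rw [Finset.sum_range_succ, show (m+1).choose (m+2) = 0 from Nat.choose_eq_zero_of_lt (by omega)]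
    simp only [s]
    push_cast
    simp
  have hs0 : (s m : ℚ) = ∑ k ∈ Finset.range (m+3), ((m.choose k : ℚ)^2 * ((2*k).choose m : ℚ)^2) := by
    rw [Finset.sum_range_succ, show m.choose (m+2) = 0 from Nat.choose_eq_zero_of_lt (by omega),
        Finset.sum_range_succ, show m.choose (m+1) = 0 from Nat.choose_eq_zero_of_lt (by omega)]
    simp only [s]
    push_cast
    simp
  rw [hs2, hs1, hs0, Finset.mul_sum, Finset.mul_sum, Finset.mul_sum]
  rw [← sub_eq_zero]
  rw [show ∀ (A B C : ℚ), A - (B - C) = A - B + C from fun A B C => by ring]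
  rw [← Finset.sum_sub_distrib, ← Finset.sum_add_distrib]
  exact hsum0

theorem continuants_closed_form (P Q B : ℕ → ℚ)
    (hP0 : P 0 = 1) (hP1 : P 1 = 20) (hQ0 : Q 0 = 1) (hQ1 : Q 1 = 21)
    (hPrec : ∀ n : ℕ, 2 ≤ n →
      P n = (2 * (n : ℚ) + 1) * (3 * (n : ℚ) ^ 2 + 3 * (n : ℚ) + 1) * P (n - 1)
              - (n : ℚ) ^ 6 * P (n - 2))
    (hQrec : ∀ n : ℕ, 2 ≤ n →
      Q n = (2 * (n : ℚ) + 1) * (3 * (n : ℚ) ^ 2 + 3 * (n : ℚ) + 1) * Q (n - 1)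
              - (n : ℚ) ^ 6 * Q (n - 2))
    (hB0 : B 0 = 0) (hB1 : B 1 = 1)
    (hBrec : ∀ n : ℕ, 1 ≤ n →
      ((n : ℚ) + 1) ^ 3 * B (n + 1)
        = (2 * (n : ℚ) + 1) * (12 * (n : ℚ) ^ 2 + 12 * (n : ℚ) + 4) * B n
            - 16 * (n : ℚ) ^ 3 * B (n - 1)) :
    ∀ n : ℕ,
      P n = ((Nat.factorial (n + 1) : ℚ)) ^ 3 * (s (n + 1) : ℚ) / 4 ^ (n + 1) ∧
      Q n = ((Nat.factorial (n + 1) : ℚ)) ^ 3 * B (n + 1) / 4 ^ n := by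
  have hs1 : s 1 = 4 := by decide
  have hs2 : s 2 = 40 := by decide
  have claim : ∀ n : ℕ,
      P n * 4 ^ (n+1) = ((Nat.factorial (n + 1) : ℚ)) ^ 3 * (s (n + 1) : ℚ) ∧
      Q n * 4 ^ n = ((Nat.factorial (n + 1) : ℚ)) ^ 3 * B (n + 1) := by
    intro n
    induction n using Nat.strong_induction_on with
    | _ n ih =>
      match n with
      | 0 =>
        constructor
        · rw [hP0, hs1]; norm_num [Nat.factorial]
        · rw [hQ0, hB1]; norm_num [Nat.factorial]
      | 1 =>
        constructor
        · rw [hP1, hs2]; norm_num [Nat.factorial]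
        · have hB2 := hBrec 1 (by norm_num)
          rw [hB0, hB1] at hB2
          norm_num at hB2
          have hB2' : B 2 = 21/2 := by linarith
          rw [hQ1, show (1:ℕ)+1 = 2 from rfl, hB2']
          norm_num [Nat.factorial]
      | (m+2) =>
        have ih1 := ih (m+1) (by omega)
        have ih0 := ih m (by omega)
        have hf3 : (Nat.factorial (m+2+1) : ℚ) = ((m:ℚ)+3) * (Nat.factorial (m+2) : ℚ) := by
          rw [Nat.factorial_succ]; push_cast; ring
        have hf2 : (Nat.factorial (m+2) : ℚ) = ((m:ℚ)+2) * (Nat.factorial (m+1) : ℚ) := by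
          rw [show m+2 = (m+1)+1 by omega, Nat.factorial_succ]; push_cast; ring
        have hsr := srec (m+1)
        simp only [show m+1+2 = m+3 by omega, show m+1+1 = m+2 by omega] at hsr ih1
        push_cast at hsr
        constructor
        · have hp := hPrec (m+2) (by omega)
          simp only [show m+2-1 = m+1 by omega, show m+2-2 = m by omega] at hp
          push_cast at hp
          rw [hp]
          rw [show m+2+1 = m+3 by omega] at hf3 ⊢
          have ih1P := ih1.1
          rw [hf2] at ih1P
          rw [hf3, hf2]
          linear_combination
            (4*(2*(m:ℚ)+5)*(3*((m:ℚ)+2)^2+3*((m:ℚ)+2)+1)) * ih1P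
            - (16*((m:ℚ)+2)^6) * ih0.1
            - ((((m:ℚ)+2) * (Nat.factorial (m+1) : ℚ))^3) * hsr
        · have hq := hQrec (m+2) (by omega)
          simp only [show m+2-1 = m+1 by omega, show m+2-2 = m by omega] at hq
          push_cast at hq
          have hB := hBrec (m+2) (by omega)
          simp only [show m+2-1 = m+1 by omega, show m+2+1 = m+3 by omega] at hB
          push_cast at hB
          rw [hq]
          rw [show m+2+1 = m+3 by omega] at hf3 ⊢
          have ih1Q := ih1.2
          rw [hf2] at ih1Q
          rw [hf3, hf2]
          linear_combination
            (4*(2*(m:ℚ)+5)*(3*((m:ℚ)+2)^2+3*((m:ℚ)+2)+1)) * ih1Q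
            - (16*((m:ℚ)+2)^6) * ih0.2
            - ((((m:ℚ)+2) * (Nat.factorial (m+1) : ℚ))^3) * hB
  intro n
  obtain ⟨h1, h2⟩ := claim n
  constructor
  · rw [eq_div_iff (by positivity : ((4:ℚ)^(n+1)) ≠ 0)]
    linear_combination h1
  · rw [eq_div_iff (by positivity : ((4:ℚ)^n) ≠ 0)]
    linear_combination h2
end

section
/- The sequence s_n := ∑_{k=0}^n (n choose k)² (2k choose n)² satisfies s_0 = 1, s_1 = 4, and the three-term cubic recurrence (n+1)³ s_{n+1} = (2n+1)(12n²+12n+4) s_n − 16 n³ s_{n−1} for every n ≥ 1. -/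
lemma L_up (n k : ℕ) :
    ((n : ℚ) + 1 - k) * ((n + 1).choose k : ℚ) = ((n : ℚ) + 1) * (n.choose k : ℚ) := by
  rcases le_or_gt k (n + 1) with h | h
  · have h0 := Nat.choose_mul_succ_eq n k
    have hc : ((n + 1 - k : ℕ) : ℚ) = (n : ℚ) + 1 - k := by
      push_cast [Nat.cast_sub h]; ring
    have := congrArg (fun t : ℕ => (t : ℚ)) h0
    push_cast at this
    rw [← hc] at *
    linarith [this]
  · rw [Nat.choose_eq_zero_of_lt h, Nat.choose_eq_zero_of_lt (by omega)]
    simp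

lemma L_low (n k : ℕ) :
    ((k : ℚ) + 1) * (n.choose (k + 1) : ℚ) = ((n : ℚ) - k) * (n.choose k : ℚ) := by
  rcases le_or_gt k n with h | h
  · have h0 := Nat.choose_succ_right_eq n k
    have hc : ((n - k : ℕ) : ℚ) = (n : ℚ) - k := by push_cast [Nat.cast_sub h]; ring
    have := congrArg (fun t : ℕ => (t : ℚ)) h0
    push_cast at this
    rw [← hc]
    linarith [this]
  · rw [Nat.choose_eq_zero_of_lt h, Nat.choose_eq_zero_of_lt (by omega)]
    simp

lemma L_succ (n k : ℕ) :
    ((n : ℚ) + 1) * (n.choose k : ℚ) = ((k : ℚ) + 1) * ((n + 1).choose (k + 1) : ℚ) := by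
  have h0 := Nat.add_one_mul_choose_eq n k
  have := congrArg (fun t : ℕ => (t : ℚ)) h0
  push_cast at this
  linarith [this]

/-- Certificate polynomial. -/
def Pq (x y : ℚ) : ℚ :=
  (7*x^5 + 17*x^4 + 13*x^3 + 3*x^2)
  + y * (-44*x^4 - 92*x^3 - 60*x^2 - 12*x)
  + y^2 * (100*x^3 + 168*x^2 + 84*x + 12)
  + y^3 * (-96*x^2 - 112*x - 32)
  + y^4 * (32*x + 16)

/-- Certificate function (here n = m+1). -/
def gq (m k : ℕ) : ℚ :=
  Pq ((m : ℚ) + 1) (k : ℚ) * (((m + 2).choose k : ℕ) : ℚ) ^ 2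
    * (((2 * k).choose (m + 1) : ℕ) : ℚ) ^ 2 / ((m : ℚ) + 2) ^ 2

set_option maxHeartbeats 4000000 in
lemma key (m k : ℕ) :
    ((m : ℚ) + 2) ^ 3 * (((m + 2).choose k : ℚ) ^ 2 * (((2 * k).choose (m + 2) : ℚ)) ^ 2)
      - (2 * ((m : ℚ) + 1) + 1) * (12 * ((m : ℚ) + 1) ^ 2 + 12 * ((m : ℚ) + 1) + 4)
          * (((m + 1).choose k : ℚ) ^ 2 * (((2 * k).choose (m + 1) : ℚ)) ^ 2)
      + 16 * ((m : ℚ) + 1) ^ 3 * ((m.choose k : ℚ) ^ 2 * (((2 * k).choose m : ℚ)) ^ 2)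
      = gq m (k + 1) - gq m k := by
  have hQ2 : ((m : ℚ) + 2) ≠ 0 := by positivity
  have hQ1 : ((m : ℚ) + 1) ≠ 0 := by positivity
  have hk1 : ((k : ℚ) + 1) ≠ 0 := by positivity
  by_cases hk : k = m + 2
  · -- k = n+1 case
    subst hk
    have hz1 : (m + 1).choose (m + 2) = 0 := Nat.choose_eq_zero_of_lt (by omega)
    have hz2 : m.choose (m + 2) = 0 := Nat.choose_eq_zero_of_lt (by omega)
    have hz3 : (m + 2).choose (m + 2 + 1) = 0 := Nat.choose_eq_zero_of_lt (by omega)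
    have hrel := L_low (2 * (m + 2)) (m + 1)
    rw [show m + 1 + 1 = m + 2 from rfl] at hrel
    push_cast at hrel
    have ec : (((2 * (m + 2)).choose (m + 2) : ℕ) : ℚ)
        = ((m : ℚ) + 3) * (((2 * (m + 2)).choose (m + 1) : ℕ) : ℚ) / ((m : ℚ) + 2) := by
      rw [eq_div_iff hQ2]; linear_combination hrel
    simp only [gq, Pq, hz1, hz2, hz3, Nat.choose_self]
    push_cast
    rw [ec]
    field_simp
    ring
  · by_cases hm0 : m = 2 * k
    · -- n = 2k+1 case
      subst hm0
      have hz1 : (2 * k).choose (2 * k + 2) = 0 := Nat.choose_eq_zero_of_lt (by omega)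
      have hz2 : (2 * k).choose (2 * k + 1) = 0 := Nat.choose_eq_zero_of_lt (by omega)
      have hA := L_succ (2 * k + 1) k
      rw [show 2 * k + 1 + 1 = 2 * k + 2 from rfl] at hA
      have hB := L_up (2 * k) k
      push_cast at hA hB
      have e6 : (((2 * (k + 1)).choose (2 * k + 1) : ℕ) : ℚ) = 2 * (k : ℚ) + 2 := by
        have h := L_low (2 * (k + 1)) (2 * k + 1)
        rw [show 2 * k + 1 + 1 = 2 * (k + 1) from by ring, Nat.choose_self] at h
        push_cast at h
        linarith
      have e5 : (((2 * k + 2).choose (k + 1) : ℕ) : ℚ)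
          = (2 * (k : ℚ) + 2) * (2 * (k : ℚ) + 1) * ((2 * k).choose k : ℚ)
              / (((k : ℚ) + 1) * ((k : ℚ) + 1)) := by
        rw [eq_div_iff (mul_ne_zero hk1 hk1)]
        linear_combination -((k : ℚ) + 1) * hA + (2 * (k : ℚ) + 2) * hB
      simp only [gq, Pq, hz1, hz2, Nat.choose_self,
        show (2 * k + 2 : ℕ) = 2 * k + 1 + 1 from rfl]
      push_cast
      rw [show (2 * (k : ℚ) + 1 + 1) = 2 * (k : ℚ) + 2 from by ring] at *
      rw [e6]
      rw [show ((2 * k + 1 + 1 : ℕ)) = 2 * k + 2 from rfl, e5]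
      field_simp
      ring
    · by_cases hm1 : m = 2 * k + 1
      · -- n = 2k+2 case : LHS = 0 and Pq vanishes
        subst hm1
        have hz1 : (2 * k).choose (2 * k + 1 + 2) = 0 := Nat.choose_eq_zero_of_lt (by omega)
        have hz2 : (2 * k).choose (2 * k + 1 + 1) = 0 := Nat.choose_eq_zero_of_lt (by omega)
        have hz3 : (2 * k).choose (2 * k + 1) = 0 := Nat.choose_eq_zero_of_lt (by omega)
        have hc1 : (2 * (k + 1)).choose (2 * k + 1 + 1) = 1 := by
          rw [show 2 * k + 1 + 1 = 2 * (k + 1) from by ring, Nat.choose_self]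
        have hP : Pq (((2 * k + 1 : ℕ) : ℚ) + 1) (((k + 1 : ℕ)) : ℚ) = 0 := by
          simp only [Pq]; push_cast; ring
        simp only [gq, hz1, hz2, hz3, hc1, hP]
        push_cast
        norm_num
      · -- generic case
        have hd1 : ((m : ℚ) + 2) - k ≠ 0 := by
          intro h
          exact hk (by exact_mod_cast (by linarith : (k : ℚ) = (m : ℚ) + 2))
        have hd2 : 2 * (k : ℚ) - m ≠ 0 := by
          intro h
          exact hm0 (by exact_mod_cast (by linarith : (m : ℚ) = 2 * (k : ℚ)))
        have hd3 : 2 * (k : ℚ) + 1 - m ≠ 0 := by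
          intro h
          exact hm1 (by exact_mod_cast (by linarith : (m : ℚ) = 2 * (k : ℚ) + 1))
        have h1 := L_up (m + 1) k
        rw [show m + 1 + 1 = m + 2 from rfl] at h1
        push_cast at h1
        have e1 : (((m + 2).choose k : ℕ) : ℚ)
            = ((m : ℚ) + 2) * ((m + 1).choose k : ℚ) / (((m : ℚ) + 2) - k) := by
          rw [eq_div_iff hd1]; linear_combination h1
        have h2 := L_low (2 * k) (m + 1)
        rw [show m + 1 + 1 = m + 2 from rfl] at h2
        push_cast at h2
        have e2 : (((2 * k).choose (m + 2) : ℕ) : ℚ)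
            = (2 * (k : ℚ) - m - 1) * ((2 * k).choose (m + 1) : ℚ) / ((m : ℚ) + 2) := by
          rw [eq_div_iff hQ2]; linear_combination h2
        have h3 := L_up m k
        push_cast at h3
        have e3 : ((m.choose k : ℕ) : ℚ)
            = ((m : ℚ) + 1 - k) * ((m + 1).choose k : ℚ) / ((m : ℚ) + 1) := by
          rw [eq_div_iff hQ1]; linear_combination -h3
        have h4 := L_low (2 * k) m
        push_cast at h4
        have e4 : (((2 * k).choose m : ℕ) : ℚ)
            = ((m : ℚ) + 1) * ((2 * k).choose (m + 1) : ℚ) / (2 * (k : ℚ) - m) := by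
          rw [eq_div_iff hd2]; linear_combination -h4
        have h5 := L_succ (m + 1) k
        rw [show m + 1 + 1 = m + 2 from rfl] at h5
        push_cast at h5
        have e5 : (((m + 2).choose (k + 1) : ℕ) : ℚ)
            = ((m : ℚ) + 2) * ((m + 1).choose k : ℚ) / ((k : ℚ) + 1) := by
          rw [eq_div_iff hk1]; linear_combination -h5
        have hA := L_up (2 * k) (m + 1)
        push_cast at hA
        have hB := L_up (2 * k + 1) (m + 1)
        rw [show 2 * k + 1 + 1 = 2 * (k + 1) from by ring] at hB
        push_cast at hB
        have e6 : (((2 * (k + 1)).choose (m + 1) : ℕ) : ℚ)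
            = (2 * (k : ℚ) + 2) * (2 * (k : ℚ) + 1) * ((2 * k).choose (m + 1) : ℚ)
                / ((2 * (k : ℚ) + 1 - m) * (2 * (k : ℚ) - m)) := by
          rw [eq_div_iff (mul_ne_zero hd3 hd2)]
          linear_combination (2 * (k : ℚ) - m) * hB + (2 * (k : ℚ) + 2) * hA
        simp only [gq, Pq]
        push_cast
        rw [e1, e2, e3, e4, e5, e6]
        field_simp
        ring

theorem s_recurrence :
    s 0 = 1 ∧ s 1 = 4 ∧
    ∀ n : ℕ, 1 ≤ n →
      ((n : ℚ) + 1) ^ 3 * (s (n + 1) : ℚ)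
        = (2 * (n : ℚ) + 1) * (12 * (n : ℚ) ^ 2 + 12 * (n : ℚ) + 4) * (s n : ℚ)
            - 16 * (n : ℚ) ^ 3 * (s (n - 1) : ℚ) := by
  refine ⟨by simp [s], by simp [s, Finset.sum_range_succ], ?_⟩
  intro n hn
  obtain ⟨m, rfl⟩ : ∃ m, n = m + 1 := ⟨n - 1, by omega⟩
  have tele : ∑ k ∈ Finset.range (m + 3), (gq m (k + 1) - gq m k)
      = gq m (m + 3) - gq m 0 := Finset.sum_range_sub (gq m) (m + 3)
  have hg1 : gq m (m + 3) = 0 := by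
    simp [gq, Nat.choose_eq_zero_of_lt (show m + 2 < m + 3 by omega)]
  have hg0 : gq m 0 = 0 := by
    simp [gq, Nat.choose_eq_zero_of_lt (show 0 < m + 1 by omega)]
  have keysum : ∑ k ∈ Finset.range (m + 3),
      (((m : ℚ) + 2) ^ 3 * (((m + 2).choose k : ℚ) ^ 2 * (((2 * k).choose (m + 2) : ℚ)) ^ 2)
        - (2 * ((m : ℚ) + 1) + 1) * (12 * ((m : ℚ) + 1) ^ 2 + 12 * ((m : ℚ) + 1) + 4)
            * (((m + 1).choose k : ℚ) ^ 2 * (((2 * k).choose (m + 1) : ℚ)) ^ 2)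
        + 16 * ((m : ℚ) + 1) ^ 3 * ((m.choose k : ℚ) ^ 2 * (((2 * k).choose m : ℚ)) ^ 2))
      = 0 := by
    rw [Finset.sum_congr rfl (fun k _ => key m k), tele, hg1, hg0]
    ring
  have split : ∑ k ∈ Finset.range (m + 3),
      (((m : ℚ) + 2) ^ 3 * (((m + 2).choose k : ℚ) ^ 2 * (((2 * k).choose (m + 2) : ℚ)) ^ 2)
        - (2 * ((m : ℚ) + 1) + 1) * (12 * ((m : ℚ) + 1) ^ 2 + 12 * ((m : ℚ) + 1) + 4)
            * (((m + 1).choose k : ℚ) ^ 2 * (((2 * k).choose (m + 1) : ℚ)) ^ 2)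
        + 16 * ((m : ℚ) + 1) ^ 3 * ((m.choose k : ℚ) ^ 2 * (((2 * k).choose m : ℚ)) ^ 2))
      = ((m : ℚ) + 2) ^ 3 * ∑ k ∈ Finset.range (m + 3),
            (((m + 2).choose k : ℚ) ^ 2 * (((2 * k).choose (m + 2) : ℚ)) ^ 2)
        - (2 * ((m : ℚ) + 1) + 1) * (12 * ((m : ℚ) + 1) ^ 2 + 12 * ((m : ℚ) + 1) + 4)
            * ∑ k ∈ Finset.range (m + 3),
                (((m + 1).choose k : ℚ) ^ 2 * (((2 * k).choose (m + 1) : ℚ)) ^ 2)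
        + 16 * ((m : ℚ) + 1) ^ 3 * ∑ k ∈ Finset.range (m + 3),
            ((m.choose k : ℚ) ^ 2 * (((2 * k).choose m : ℚ)) ^ 2) := by
    rw [Finset.mul_sum, Finset.mul_sum, Finset.mul_sum, ← Finset.sum_sub_distrib,
      ← Finset.sum_add_distrib]
  have E1 : ∑ k ∈ Finset.range (m + 3),
      (((m + 2).choose k : ℚ) ^ 2 * (((2 * k).choose (m + 2) : ℚ)) ^ 2)
      = (s (m + 2) : ℚ) := by
    rw [s]; push_cast; rfl
  have E2 : ∑ k ∈ Finset.range (m + 3),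
      (((m + 1).choose k : ℚ) ^ 2 * (((2 * k).choose (m + 1) : ℚ)) ^ 2)
      = (s (m + 1) : ℚ) := by
    rw [Finset.sum_range_succ, s,
      Nat.choose_eq_zero_of_lt (show m + 1 < m + 2 by omega)]
    push_cast; ring
  have E3 : ∑ k ∈ Finset.range (m + 3),
      ((m.choose k : ℚ) ^ 2 * (((2 * k).choose m : ℚ)) ^ 2)
      = (s m : ℚ) := by
    rw [Finset.sum_range_succ, Finset.sum_range_succ, s,
      Nat.choose_eq_zero_of_lt (show m < m + 2 by omega),
      Nat.choose_eq_zero_of_lt (show m < m + 1 by omega)]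
    push_cast; ring
  rw [split, E1, E2, E3] at keysum
  have hred : m + 1 - 1 = m := by omega
  rw [hred]
  push_cast
  linarith [keysum]
end

section
/- For every complex s with 0 < Re(s) < 1 one has the functional equation Γ(s)·(π/√2)^{−s}·ζ(s+3)·ζ(s)·(1−2^{−s−3})(1−2^{−s−1})(1−2^{1−s}) = Γ(−s−2)·(π/√2)^{s+2}·ζ(1−s)·ζ(−2−s)·(1−2^{s−1})(1−2^{s+1})(1−2^{s+3}), where ζ is the (analytically continued) Riemann zeta function and Γ is the Gamma function. -/
open scoped Real

theorem functional_equation_g8 (s : ℂ) (h0 : 0 < s.re) (h1 : s.re < 1) :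
    Complex.Gamma s * ((π : ℂ) / (Real.sqrt 2 : ℂ)) ^ (-s) *
        (riemannZeta (s + 3) * riemannZeta s) *
        ((1 - (2 : ℂ) ^ (-s - 3)) * (1 - (2 : ℂ) ^ (-s - 1)) * (1 - (2 : ℂ) ^ (1 - s)))
      = Complex.Gamma (-s - 2) * ((π : ℂ) / (Real.sqrt 2 : ℂ)) ^ (s + 2) *
        (riemannZeta (1 - s) * riemannZeta (-2 - s)) *
        ((1 - (2 : ℂ) ^ (s - 1)) * (1 - (2 : ℂ) ^ (s + 1)) * (1 - (2 : ℂ) ^ (s + 3))) := by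
  have hπ : (0:ℝ) < π := Real.pi_pos
  have hπc : (π:ℂ) ≠ 0 := by exact_mod_cast hπ.ne'
  -- zeta functional equations
  have hs1 : s ≠ 1 := by
    intro h; rw [h] at h1; norm_num at h1
  have hsn : ∀ n : ℕ, s ≠ -n := by
    intro n h
    have : s.re = -(n:ℝ) := by rw [h]; simp
    rw [this] at h0
    have : (0:ℝ) ≤ n := n.cast_nonneg
    linarith
  have hz1 : riemannZeta (1 - s)
      = 2 * (2 * (π:ℂ)) ^ (-s) * Complex.Gamma s * Complex.cos ((π:ℂ) * s / 2) * riemannZeta s :=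
    riemannZeta_one_sub hsn hs1
  have hs31 : s + 3 ≠ 1 := by
    intro h
    have : s = -2 := by linear_combination h
    rw [this] at h0; norm_num at h0
  have hs3n : ∀ n : ℕ, s + 3 ≠ -n := by
    intro n h
    have : s.re = -(n:ℝ) - 3 := by
      have : s = -(n:ℂ) - 3 := by linear_combination h
      rw [this]; simp
    rw [this] at h0
    have : (0:ℝ) ≤ n := n.cast_nonneg
    linarith
  have hz2 : riemannZeta (-2 - s)
      = 2 * (2 * (π:ℂ)) ^ (-(s+3)) * Complex.Gamma (s+3)
        * Complex.cos ((π:ℂ) * (s+3) / 2) * riemannZeta (s+3) := by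
    have := riemannZeta_one_sub hs3n hs31
    rw [show (1:ℂ) - (s+3) = -2 - s by ring] at this
    exact this
  -- trig facts
  have hsin : Complex.sin ((π:ℂ) * (s+3)) = -Complex.sin ((π:ℂ) * s) := by
    rw [show (π:ℂ) * (s+3) = ((π:ℂ)*s + π) + π + π by ring]
    rw [Complex.sin_add_pi, Complex.sin_add_pi, Complex.sin_add_pi]
    ring
  have hcos : Complex.cos ((π:ℂ) * (s+3) / 2) = Complex.sin ((π:ℂ) * s / 2) := by
    rw [show (π:ℂ) * (s+3) / 2 = ((π:ℂ)*s/2 + π) + π/2 by ring]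
    rw [Complex.cos_add_pi_div_two, Complex.sin_add_pi]
    ring
  have hdouble : Complex.sin ((π:ℂ) * s)
      = 2 * Complex.sin ((π:ℂ) * s / 2) * Complex.cos ((π:ℂ) * s / 2) := by
    have h := Complex.sin_two_mul ((π:ℂ)*s/2)
    rw [show 2 * ((π:ℂ)*s/2) = (π:ℂ)*s by ring] at h
    exact h
  have hsinne : Complex.sin ((π:ℂ) * s) ≠ 0 := by
    rw [Complex.sin_ne_zero_iff]
    intro k hk
    have hk' : s = (k:ℂ) := by
      have h : (π:ℂ) * s = (π:ℂ) * (k:ℂ) := by linear_combination hk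
      exact mul_left_cancel₀ hπc h
    have hre : s.re = (k:ℝ) := by rw [hk']; simp
    rw [hre] at h0 h1
    have hk0 : (0:ℤ) < k := by exact_mod_cast h0
    have hk1 : k < 1 := by exact_mod_cast h1
    omega
  -- Gamma reflection
  have hG : Complex.Gamma (-s-2) * Complex.Gamma (s+3)
      = (π:ℂ) / Complex.sin ((π:ℂ) * (s+3)) := by
    have h := Complex.Gamma_mul_Gamma_one_sub (s+3)
    rw [show (1:ℂ) - (s+3) = -s-2 by ring] at h
    rw [mul_comm]; exact h
  have hGG : Complex.Gamma (-s-2) * Complex.Gamma (s+3)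
      * (Complex.sin ((π:ℂ)*s/2) * Complex.cos ((π:ℂ)*s/2) * 4) = -2 * (π:ℂ) := by
    rw [hG, hsin, div_neg, neg_mul, neg_mul, neg_inj, div_mul_eq_mul_div,
      div_eq_iff hsinne]
    linear_combination (-2*(π:ℂ)) * hdouble
  -- power-of-two identity
  have two_ne : (2:ℂ) ≠ 0 := two_ne_zero
  have h4 : (2:ℂ)^(1-s) * (2:ℂ)^(-s-1) * (2:ℂ)^(-s-3) = (2:ℂ)^(-3*s-3) := by
    rw [← Complex.cpow_add _ _ two_ne, ← Complex.cpow_add _ _ two_ne]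
    congr 1; ring
  have hp1 : (2:ℂ)^(-s-3) * (2:ℂ)^(s+3) = 1 := by
    rw [← Complex.cpow_add _ _ two_ne, show -s-3+(s+3) = (0:ℂ) by ring, Complex.cpow_zero]
  have hp2 : (2:ℂ)^(-s-1) * (2:ℂ)^(s+1) = 1 := by
    rw [← Complex.cpow_add _ _ two_ne, show -s-1+(s+1) = (0:ℂ) by ring, Complex.cpow_zero]
  have hp3 : (2:ℂ)^(1-s) * (2:ℂ)^(s-1) = 1 := by
    rw [← Complex.cpow_add _ _ two_ne, show (1:ℂ)-s+(s-1) = (0:ℂ) by ring, Complex.cpow_zero]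
  have hP : (1 - (2:ℂ)^(-s-3)) * (1 - (2:ℂ)^(-s-1)) * (1 - (2:ℂ)^(1-s))
      = -(2:ℂ)^(-3*s-3) * ((1 - (2:ℂ)^(s-1)) * (1 - (2:ℂ)^(s+1)) * (1 - (2:ℂ)^(s+3))) := by
    rw [← h4]
    linear_combination (-(1 - (2:ℂ)^(-s-1))*(1 - (2:ℂ)^(1-s))) * hp1
      + ((2:ℂ)^(-s-3)*(1 - (2:ℂ)^(s+3))*(1 - (2:ℂ)^(1-s))) * hp2
      + (-(2:ℂ)^(-s-3)*(2:ℂ)^(-s-1)*(1 - (2:ℂ)^(s+3))*(1 - (2:ℂ)^(s+1))) * hp3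
  -- exponential form of positive real cpow
  have hcp : ∀ (x : ℝ), 0 < x → ∀ z : ℂ, ((x:ℂ))^z = Complex.exp ((Real.log x : ℂ) * z) := by
    intro x hx z
    rw [Complex.cpow_def_of_ne_zero (by exact_mod_cast hx.ne') z, Complex.ofReal_log hx.le]
  have hA : ((π:ℂ) / (Real.sqrt 2 : ℂ)) = ((π / Real.sqrt 2 : ℝ) : ℂ) := by push_cast; ring
  have hApos : (0:ℝ) < π / Real.sqrt 2 := by positivity
  have h2πpos : (0:ℝ) < 2 * π := by positivity
  -- the cpow combination identity
  have hC : (-2 * (π:ℂ)) * (2*(π:ℂ))^(-s) * (2*(π:ℂ))^(-(s+3)) * ((π:ℂ) / (Real.sqrt 2 : ℂ))^(s+2)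
      = -(2:ℂ)^(-3*s-3) * ((π:ℂ) / (Real.sqrt 2 : ℂ))^(-s) := by
    have e2π : (2*(π:ℂ)) = ((2*π : ℝ) : ℂ) := by push_cast; ring
    have eπ : -2 * (π:ℂ) = -Complex.exp ((Real.log (2*π) : ℂ)) := by
      rw [show ((Real.log (2*π) : ℝ):ℂ) = ((Real.log (2*π) : ℝ):ℂ) * 1 by ring]
      rw [← hcp (2*π) h2πpos 1, Complex.cpow_one]
      push_cast; ring
    have e2 : (2:ℂ)^(-3*s-3) = Complex.exp ((Real.log 2 : ℂ) * (-3*s-3)) := by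
      rw [show (2:ℂ) = ((2:ℝ):ℂ) by norm_num]
      exact hcp 2 (by norm_num) _
    rw [hA, e2π, eπ, hcp _ h2πpos, hcp _ h2πpos, hcp _ hApos, hcp _ hApos, e2]
    simp only [neg_mul, ← Complex.exp_add, neg_inj]
    congr 1
    have hlA : Real.log (π / Real.sqrt 2) = Real.log π - Real.log 2 / 2 := by
      rw [Real.log_div hπ.ne' (Real.sqrt_ne_zero'.mpr (by norm_num)), Real.log_sqrt (by norm_num)]
    have hl2π : Real.log (2*π) = Real.log 2 + Real.log π := by
      rw [Real.log_mul (by norm_num) hπ.ne']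
    rw [hlA, hl2π]
    push_cast
    ring
  -- key scalar identity
  have key : ((π:ℂ) / (Real.sqrt 2 : ℂ))^(-s)
        * ((1 - (2:ℂ)^(-s-3)) * (1 - (2:ℂ)^(-s-1)) * (1 - (2:ℂ)^(1-s)))
      = (-2 * (π:ℂ)) * (2*(π:ℂ))^(-s) * (2*(π:ℂ))^(-(s+3))
        * ((π:ℂ) / (Real.sqrt 2 : ℂ))^(s+2)
        * ((1 - (2:ℂ)^(s-1)) * (1 - (2:ℂ)^(s+1)) * (1 - (2:ℂ)^(s+3))) := by
    rw [hP]
    linear_combination (-((1 - (2:ℂ)^(s-1)) * (1 - (2:ℂ)^(s+1)) * (1 - (2:ℂ)^(s+3)))) * hC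
  rw [hz1, hz2, hcos]
  linear_combination
    (Complex.Gamma s * riemannZeta s * riemannZeta (s+3)) * key
    - (Complex.Gamma s * riemannZeta s * riemannZeta (s+3)
        * (2*(π:ℂ))^(-s) * (2*(π:ℂ))^(-(s+3))
        * ((π:ℂ) / (Real.sqrt 2 : ℂ))^(s+2)
        * ((1 - (2:ℂ)^(s-1)) * (1 - (2:ℂ)^(s+1)) * (1 - (2:ℂ)^(s+3)))) * hGG
end

section
/- The function s ↦ ζ(s)·ζ(s−3)·(1−2^{−s})(1−2^{2−s})(1−2^{4−s}) (defined for complex s ≠ 1 using the analytically continued Riemann zeta function) tends to −(7/(8π²))·ζ(3) as s → 1 with s ≠ 1, where ζ(3) = ∑_{n≥1} 1/n³. -/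
open scoped Real
open Filter Complex

/-- ζ(3) = ∑_{n≥1} 1/n³. -/
noncomputable def zeta3 : ℝ := ∑' n : ℕ, 1 / ((n : ℝ) + 1) ^ 3

lemma zeta3_aux : riemannZeta 3 = (zeta3 : ℂ) := by
  rw [zeta_eq_tsum_one_div_nat_add_one_cpow (by norm_num), zeta3, Complex.ofReal_tsum]
  congr 1; ext n
  rw [show (3:ℂ) = ((3:ℕ):ℂ) by norm_num, Complex.cpow_natCast]
  push_cast
  ring

theorem L_g8_at_one :
    Filter.Tendsto
      (fun s : ℂ => riemannZeta s * riemannZeta (s - 3) *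
        ((1 - (2 : ℂ) ^ (-s)) * (1 - (2 : ℂ) ^ (2 - s)) * (1 - (2 : ℂ) ^ (4 - s))))
      (nhdsWithin 1 {(1 : ℂ)}ᶜ)
      (nhds (-(7 / (8 * (π : ℂ) ^ 2)) * (zeta3 : ℂ))) := by
  have hπ : (π : ℂ) ≠ 0 := by
    simpa using Complex.ofReal_ne_zero.mpr Real.pi_ne_zero
  set P : ℂ → ℂ := fun s =>
    (1 - (2 : ℂ) ^ (-s)) * (1 - (2 : ℂ) ^ (2 - s)) * (1 - (2 : ℂ) ^ (4 - s)) with hP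
  set C : ℂ → ℂ := fun s =>
    2 * (2 * (π:ℂ)) ^ (s - 4) * Complex.Gamma (4 - s) * riemannZeta (4 - s) * P s with hC
  set g : ℂ → ℂ := fun s =>
    ((s - 1) * riemannZeta s) * (Complex.cos ((π:ℂ) * s / 2) / (s - 1)) * C s with hg
  -- limit of the residue factor
  have h1 : Tendsto (fun s : ℂ => (s - 1) * riemannZeta s) (nhdsWithin 1 {(1:ℂ)}ᶜ)
      (nhds 1) := riemannZeta_residue_one
  -- limit of the cosine slope
  have h2 : Tendsto (fun s : ℂ => Complex.cos ((π:ℂ) * s / 2) / (s - 1))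
      (nhdsWithin 1 {(1:ℂ)}ᶜ) (nhds (-((π:ℂ) / 2))) := by
    have hlin : HasDerivAt (fun s : ℂ => (π:ℂ) * s / 2) ((π:ℂ) / 2) 1 := by
      simpa using ((hasDerivAt_id (1:ℂ)).const_mul (π:ℂ)).div_const 2
    have hd : HasDerivAt (fun s : ℂ => Complex.cos ((π:ℂ) * s / 2)) (-((π:ℂ) / 2)) 1 := by
      have := (Complex.hasDerivAt_cos ((π:ℂ) * 1 / 2)).comp 1 hlin
      simpa [Complex.sin_pi_div_two, Function.comp_def] using this
    have hsl := hasDerivAt_iff_tendsto_slope.mp hd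
    refine hsl.congr' ?_
    filter_upwards [self_mem_nhdsWithin] with s hs
    have h12 : (π:ℂ) * 1 / 2 = (π:ℂ) / 2 := by ring
    simp [slope_def_field, h12, Complex.cos_pi_div_two]
  -- continuity of the remaining factor
  have hPc : ContinuousAt P 1 := by
    refine (ContinuousAt.mul (ContinuousAt.mul ?_ ?_) ?_) <;>
      exact (continuousAt_const.sub
        (ContinuousAt.const_cpow (by fun_prop) (Or.inl (by norm_num))))
  have h3 : ContinuousAt C 1 := by
    have hG : ContinuousAt (fun s : ℂ => Complex.Gamma (4 - s)) 1 := by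
      have h3' : ∀ m : ℕ, (3 : ℂ) ≠ -m := by
        intro m h
        have := congrArg Complex.re h
        simp at this
        linarith [Nat.cast_nonneg (α := ℝ) m]
      have hb := (Complex.differentiableAt_Gamma 3 h3').continuousAt
      have hcomp : ContinuousAt (fun s : ℂ => (4 : ℂ) - s) 1 :=
        (continuous_const.sub continuous_id).continuousAt
      have : ContinuousAt (Complex.Gamma ∘ fun s : ℂ => (4 : ℂ) - s) 1 :=
        ContinuousAt.comp (by norm_num; exact hb) hcomp
      exact this
    have hZ : ContinuousAt (fun s : ℂ => riemannZeta (4 - s)) 1 := by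
      have hb := (differentiableAt_riemannZeta (s := 3) (by norm_num)).continuousAt
      have hcomp : ContinuousAt (fun s : ℂ => (4 : ℂ) - s) 1 :=
        (continuous_const.sub continuous_id).continuousAt
      have : ContinuousAt (riemannZeta ∘ fun s : ℂ => (4 : ℂ) - s) 1 :=
        ContinuousAt.comp (by norm_num; exact hb) hcomp
      exact this
    refine ContinuousAt.mul (ContinuousAt.mul (ContinuousAt.mul
      (continuousAt_const.mul ?_) hG) hZ) hPc
    exact ContinuousAt.const_cpow ((continuous_id.sub continuous_const).continuousAt)
      (Or.inl (by simp [hπ]))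
  -- the limit of g
  have hgl : Tendsto g (nhdsWithin 1 {(1:ℂ)}ᶜ) (nhds (1 * (-((π:ℂ)/2)) * C 1)) :=
    (h1.mul h2).mul (h3.tendsto.mono_left nhdsWithin_le_nhds)
  -- value of the limit
  have hval : 1 * (-((π:ℂ)/2)) * C 1 = -(7 / (8 * (π : ℂ) ^ 2)) * (zeta3 : ℂ) := by
    have e1 : ((1:ℂ) - 4) = ((-3 : ℤ) : ℂ) := by norm_num
    have e2 : ((4:ℂ) - 1) = 3 := by norm_num
    have eG : Complex.Gamma (4 - 1) = 2 := by
      rw [show ((4:ℂ) - 1) = ((2:ℕ):ℂ) + 1 by norm_num, Complex.Gamma_nat_eq_factorial]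
      norm_num
    have eP : P 1 = 7 / 2 := by
      rw [hP]
      simp only [show -(1:ℂ) = ((-1:ℤ):ℂ) by norm_num,
        show ((2:ℂ) - 1) = ((1:ℤ):ℂ) by norm_num,
        show ((4:ℂ) - 1) = ((3:ℤ):ℂ) by norm_num, Complex.cpow_intCast]
      norm_num
    rw [hC]
    have hpow : (2*(π:ℂ))^(-3:ℤ) = (8*(π:ℂ)^3)⁻¹ := by
      rw [show (-3:ℤ) = -((3:ℕ):ℤ) by norm_num, zpow_neg, zpow_natCast]
      congr 1; ring
    simp only [e1, e2, eG, (by rw [← e2]; exact eG : Complex.Gamma 3 = 2), eP, Complex.cpow_intCast, zeta3_aux, hpow]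
    have hπ3 : ((π:ℂ))^3 ≠ 0 := pow_ne_zero 3 hπ
    field_simp [inv_pow]
  rw [← hval]
  -- eventual equality of f and g near 1
  refine hgl.congr' ?_
  have hev : ∀ᶠ s : ℂ in nhdsWithin 1 {(1:ℂ)}ᶜ, dist s 1 < 1 ∧ s ≠ 1 := by
    filter_upwards [self_mem_nhdsWithin,
      eventually_nhdsWithin_of_eventually_nhds (Metric.ball_mem_nhds (1:ℂ) one_pos)]
      with s h1' h2'
    exact ⟨h2', h1'⟩
  filter_upwards [hev] with s hs
  obtain ⟨hdist, hne⟩ := hs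
  have hre : |s.re - 1| < 1 := by
    have : |(s - 1).re| ≤ ‖s - 1‖ := Complex.abs_re_le_norm _
    have hd : ‖s - 1‖ < 1 := by
      simpa [Complex.dist_eq] using hdist
    simpa [Complex.sub_re] using lt_of_le_of_lt this hd
  have hre1 : 0 < s.re := by
    rcases abs_lt.mp hre with ⟨h, _⟩; linarith
  have hre2 : s.re < 2 := by
    rcases abs_lt.mp hre with ⟨_, h⟩; linarith
  have h4n : ∀ n : ℕ, (4 - s) ≠ -(n:ℂ) := by
    intro n h
    have := congrArg Complex.re h
    simp [Complex.sub_re] at this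
    linarith [Nat.cast_nonneg (α := ℝ) n]
  have h41 : (4 : ℂ) - s ≠ 1 := by
    intro h
    have := congrArg Complex.re h
    simp [Complex.sub_re] at this
    linarith
  have hz : riemannZeta (s - 3) =
      2 * (2 * (π:ℂ)) ^ (-(4 - s)) * Complex.Gamma (4 - s) *
        Complex.cos ((π:ℂ) * (4 - s) / 2) * riemannZeta (4 - s) := by
    have := riemannZeta_one_sub (s := 4 - s) h4n h41
    rwa [show (1 : ℂ) - (4 - s) = s - 3 by ring] at this
  have hcos : Complex.cos ((π:ℂ) * (4 - s) / 2) = Complex.cos ((π:ℂ) * s / 2) := by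
    rw [show (π:ℂ) * (4 - s) / 2 = 2 * (π:ℂ) - (π:ℂ) * s / 2 by ring]
    simp [Complex.cos_sub, Complex.cos_two_pi, Complex.sin_two_pi]
  have hexp : -((4:ℂ) - s) = s - 4 := by ring
  have hs1 : s - 1 ≠ 0 := sub_ne_zero.mpr hne
  rw [hg, hC, hz, hcos, hexp]
  field_simp
  ring
end
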